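/- Suppose a stopping time τ with respect to the frequency filtration satisfies R(μ,τ)² ≤ C·R(μ, m_s)² for the balanced oracle m_s = m_s(μ) and some C ≥ 1. Then for any μ̄ ∈ R^D with μ̄_i = μ_i for all i ≤ 3C·m_s, one has R(μ̄,τ)² ≥ (1/3)·B²_{⌊3C m_s⌋}(μ̄). -/

import Mathlib

open MeasureTheory ProbabilityTheory Real Finset
open scoped NNReal ENNReal

/-- The risk `R(ν,τ)² = E_ν[‖μ̂^(τ) − ν‖²]` of the truncated SVD estimator with a
data-dependent truncation rule `τ`, in the Gaussian sequence model
`Y_i = λ_i ν_i + δ ε_i`, `i = 1, …, D` (data outside `{1,…,D}` is set to `0`). -/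
noncomputable def svdRisk {Ω : Type*} [MeasurableSpace Ω] (P : Measure Ω) (D : ℕ)
    (lam : ℕ → ℝ) (δ : ℝ) (ε : ℕ → Ω → ℝ) (τ : (ℕ → ℝ) → ℕ) (ν : ℕ → ℝ) : ℝ :=
  ∫ ω, ∑ i ∈ Finset.Icc 1 D,
    ((if i ≤ τ (fun j => if 1 ≤ j ∧ j ≤ D then lam j * ν j + δ * ε j ω else 0)
        then (lam i)⁻¹ * (lam i * ν i + δ * ε i ω) else 0) - ν i) ^ 2 ∂P

lemma aux_hasDerivAt (x : ℝ) :
    HasDerivAt (fun x : ℝ => -x * rexp (-(1/2) * x ^ 2))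
      (x ^ 2 * rexp (-(1/2) * x ^ 2) - rexp (-(1/2) * x ^ 2)) x := by
  have h1 : HasDerivAt (fun x : ℝ => -(1/2) * x ^ 2) (-(1/2) * (2 * x)) x := by
    simpa using ((hasDerivAt_pow 2 x).const_mul (-(1/2) : ℝ))
  have h2 := h1.exp
  have h3 : HasDerivAt (fun x : ℝ => -x) (-1) x := (hasDerivAt_id x).neg
  have := h3.fun_mul h2
  refine this.congr_deriv ?_
  ring

lemma aux_integrable_sq_exp :
    Integrable (fun x : ℝ => x ^ 2 * rexp (-(1/2) * x ^ 2)) := by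
  have hb : (0:ℝ) < 1/4 := by norm_num
  refine (integrable_exp_neg_mul_sq hb).const_mul 4 |>.mono'
    ?_ (Filter.Eventually.of_forall fun x => ?_)
  · exact ((measurable_id.pow_const 2).mul
      (((measurable_id.pow_const 2).const_mul _).exp)).aestronglyMeasurable
  · have h1 : x ^ 2 ≤ 4 * rexp ((1/4) * x ^ 2) := by
      have := Real.add_one_le_exp ((1/4) * x ^ 2)
      nlinarith [Real.exp_nonneg ((1/4) * x ^ 2)]
    have h2 : rexp ((1/4) * x ^ 2) * rexp (-(1/2) * x ^ 2) = rexp (-(1/4) * x ^ 2) := by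
      rw [← Real.exp_add]; ring_nf
    have h3 : (0:ℝ) ≤ rexp (-(1/2) * x ^ 2) := Real.exp_nonneg _
    have h4 : x ^ 2 * rexp (-(1/2) * x ^ 2) ≤ 4 * rexp (-(1/4) * x ^ 2) := by
      calc x ^ 2 * rexp (-(1/2) * x ^ 2)
          ≤ 4 * rexp ((1/4) * x ^ 2) * rexp (-(1/2) * x ^ 2) := by
            exact mul_le_mul_of_nonneg_right h1 h3
        _ = 4 * rexp (-(1/4) * x ^ 2) := by rw [mul_assoc, h2]
    rw [Real.norm_eq_abs, abs_of_nonneg (by positivity)]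
    exact h4

lemma aux_tendsto_atTop :
    Filter.Tendsto (fun x : ℝ => -x * rexp (-(1/2) * x ^ 2)) Filter.atTop (nhds 0) := by
  apply squeeze_zero_norm' (a := fun x : ℝ => rexp (-x))
  · filter_upwards [Filter.eventually_ge_atTop (4:ℝ)] with x hx
    have h0 : (0:ℝ) ≤ x := by linarith
    have h1 : x ≤ rexp x := (Real.add_one_le_exp x).trans' (by linarith)
    rw [Real.norm_eq_abs, abs_mul, abs_neg, abs_of_nonneg h0,
      abs_of_nonneg (Real.exp_nonneg _)]
    calc x * rexp (-(1/2) * x ^ 2) ≤ rexp x * rexp (-(1/2) * x ^ 2) :=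
          mul_le_mul_of_nonneg_right h1 (Real.exp_nonneg _)
      _ = rexp (x + -(1/2) * x ^ 2) := (Real.exp_add _ _).symm
      _ ≤ rexp (-x) := Real.exp_le_exp.mpr (by nlinarith)
  · exact Real.tendsto_exp_atBot.comp Filter.tendsto_neg_atTop_atBot

lemma aux_tendsto_atBot :
    Filter.Tendsto (fun x : ℝ => -x * rexp (-(1/2) * x ^ 2)) Filter.atBot (nhds 0) := by
  apply squeeze_zero_norm' (a := fun x : ℝ => rexp x)
  · filter_upwards [Filter.eventually_le_atBot (-4:ℝ)] with x hx
    have h0 : (0:ℝ) ≤ -x := by linarith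
    have h1 : -x ≤ rexp (-x) := (Real.add_one_le_exp (-x)).trans' (by linarith)
    rw [Real.norm_eq_abs, abs_mul, abs_neg, abs_of_nonpos (by linarith),
      abs_of_nonneg (Real.exp_nonneg _)]
    calc -x * rexp (-(1/2) * x ^ 2) ≤ rexp (-x) * rexp (-(1/2) * x ^ 2) :=
          mul_le_mul_of_nonneg_right h1 (Real.exp_nonneg _)
      _ = rexp (-x + -(1/2) * x ^ 2) := (Real.exp_add _ _).symm
      _ ≤ rexp x := Real.exp_le_exp.mpr (by nlinarith)
  · exact Real.tendsto_exp_atBot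

lemma aux_integral_sq_exp :
    ∫ x : ℝ, x ^ 2 * rexp (-(1/2) * x ^ 2) = Real.sqrt (2 * π) := by
  have hb : (0:ℝ) < 1/2 := by norm_num
  have hE : Integrable (fun x : ℝ => rexp (-(1/2) * x ^ 2)) := by
    have := integrable_exp_neg_mul_sq hb
    simpa using this
  have hf' : Integrable (fun x : ℝ =>
      x ^ 2 * rexp (-(1/2) * x ^ 2) - rexp (-(1/2) * x ^ 2)) :=
    aux_integrable_sq_exp.sub hE
  have hIoi : ∫ x in Set.Ioi (0:ℝ),
      (x ^ 2 * rexp (-(1/2) * x ^ 2) - rexp (-(1/2) * x ^ 2)) = 0 - 0 := by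
    have := integral_Ioi_of_hasDerivAt_of_tendsto' (a := (0:ℝ))
      (f := fun x : ℝ => -x * rexp (-(1/2) * x ^ 2))
      (fun x _ => aux_hasDerivAt x) hf'.integrableOn aux_tendsto_atTop
    simpa using this
  have hIic : ∫ x in Set.Iic (0:ℝ),
      (x ^ 2 * rexp (-(1/2) * x ^ 2) - rexp (-(1/2) * x ^ 2)) = 0 - 0 := by
    have := integral_Iic_of_hasDerivAt_of_tendsto' (a := (0:ℝ))
      (f := fun x : ℝ => -x * rexp (-(1/2) * x ^ 2))
      (fun x _ => aux_hasDerivAt x) hf'.integrableOn aux_tendsto_atBot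
    simpa using this
  have hsplit : ∫ x : ℝ,
      (x ^ 2 * rexp (-(1/2) * x ^ 2) - rexp (-(1/2) * x ^ 2)) = 0 := by
    rw [← intervalIntegral.integral_Iic_add_Ioi (b := (0:ℝ)) hf'.integrableOn hf'.integrableOn, hIoi, hIic]
    norm_num
  have h2 : ∫ x : ℝ, rexp (-(1/2) * x ^ 2) = Real.sqrt (2 * π) := by
    have := integral_gaussian (1/2 : ℝ)
    rw [show π / (1/2 : ℝ) = 2 * π by ring] at this
    simpa using this
  have := integral_sub aux_integrable_sq_exp hE
  rw [hsplit] at this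
  linarith [this, h2.symm]

lemma aux_pdf_smul_eq :
    (fun x : ℝ => ((gaussianPDFReal 0 1 x).toNNReal : ℝ≥0) • (x ^ 2 : ℝ))
      = fun x : ℝ => (Real.sqrt (2 * π))⁻¹ * (x ^ 2 * rexp (-(1/2) * x ^ 2)) := by
  funext x
  have hnn := gaussianPDFReal_nonneg 0 1 x
  have hpdf : gaussianPDFReal 0 1 x = (Real.sqrt (2 * π))⁻¹ * rexp (-(1/2) * x ^ 2) := by
    simp only [gaussianPDFReal, NNReal.coe_one, mul_one, sub_zero]
    rw [show -x ^ 2 / (2:ℝ) = -(1/2) * x ^ 2 by ring]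
  rw [NNReal.smul_def, smul_eq_mul, Real.coe_toNNReal _ hnn, hpdf]
  ring

lemma aux_integrable_sq_gaussianReal :
    Integrable (fun x : ℝ => x ^ 2) (gaussianReal 0 1) := by
  rw [gaussianReal_of_var_ne_zero 0 one_ne_zero]
  have hmeas : Measurable fun x : ℝ => (gaussianPDFReal 0 1 x).toNNReal :=
    (measurable_gaussianPDFReal 0 1).real_toNNReal
  rw [show (gaussianPDF 0 1)
      = (fun x : ℝ => ((gaussianPDFReal 0 1 x).toNNReal : ℝ≥0∞)) from rfl,
    integrable_withDensity_iff_integrable_smul hmeas]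
  rw [aux_pdf_smul_eq]
  exact aux_integrable_sq_exp.const_mul _

lemma aux_integral_sq_gaussianReal :
    ∫ x, x ^ 2 ∂(gaussianReal 0 1) = 1 := by
  rw [gaussianReal_of_var_ne_zero 0 one_ne_zero]
  have hmeas : Measurable fun x : ℝ => (gaussianPDFReal 0 1 x).toNNReal :=
    (measurable_gaussianPDFReal 0 1).real_toNNReal
  rw [show (gaussianPDF 0 1)
      = (fun x : ℝ => ((gaussianPDFReal 0 1 x).toNNReal : ℝ≥0∞)) from rfl,
    integral_withDensity_eq_integral_smul hmeas]
  rw [show (fun x : ℝ => ((gaussianPDFReal 0 1 x).toNNReal : ℝ≥0) • (x ^ 2 : ℝ))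
      = fun x : ℝ => (Real.sqrt (2 * π))⁻¹ * (x ^ 2 * rexp (-(1/2) * x ^ 2)) from
      aux_pdf_smul_eq]
  rw [MeasureTheory.integral_const_mul, aux_integral_sq_exp]
  rw [inv_mul_cancel₀]
  positivity

lemma aux_cheb (a : ℕ → ℝ) (n k : ℕ) (hk1 : 1 ≤ k) (hkn : k ≤ n)
    (hmono : ∀ i j, 1 ≤ i → i ≤ j → j ≤ n → a i ≤ a j)
    (hnn : ∀ i, 0 ≤ a i) :
    (n : ℝ) * ∑ i ∈ Finset.Icc 1 k, a i ≤ (k : ℝ) * ∑ i ∈ Finset.Icc 1 n, a i := by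
  have hsplit : ∑ i ∈ Finset.Icc 1 n, a i
      = ∑ i ∈ Finset.Icc 1 k, a i + ∑ i ∈ Finset.Icc (k+1) n, a i := by
    rw [show Finset.Icc 1 n = Finset.Ioc 0 n from (Finset.Icc_add_one_left_eq_Ioc 0 n),
      show Finset.Icc 1 k = Finset.Ioc 0 k from (Finset.Icc_add_one_left_eq_Ioc 0 k),
      show Finset.Icc (k+1) n = Finset.Ioc k n from (Finset.Icc_add_one_left_eq_Ioc k n)]
    exact (Finset.sum_Ioc_consecutive _ (Nat.zero_le k) hkn).symm
  have h1 : ∑ i ∈ Finset.Icc 1 k, a i ≤ (k:ℝ) * a k := by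
    calc ∑ i ∈ Finset.Icc 1 k, a i ≤ ∑ _i ∈ Finset.Icc 1 k, a k :=
          Finset.sum_le_sum fun i hi => by
            have hi' := Finset.mem_Icc.mp hi
            exact hmono i k hi'.1 hi'.2 hkn
      _ = (k:ℝ) * a k := by
          rw [Finset.sum_const, Nat.card_Icc, nsmul_eq_mul]
          norm_num
  have h2 : ((n:ℝ) - k) * a k ≤ ∑ i ∈ Finset.Icc (k+1) n, a i := by
    have e1 : ∑ _i ∈ Finset.Icc (k+1) n, a k = ((n:ℝ) - k) * a k := by
      rw [Finset.sum_const, Nat.card_Icc, nsmul_eq_mul]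
      have : n + 1 - (k + 1) = n - k := by omega
      rw [this, Nat.cast_sub hkn]
    rw [← e1]
    exact Finset.sum_le_sum fun i hi => by
      have hi' := Finset.mem_Icc.mp hi
      exact hmono k i hk1 (by omega) hi'.2
  have hkn' : (k:ℝ) ≤ (n:ℝ) := Nat.cast_le.mpr hkn
  have hk0 : (0:ℝ) < k := by exact_mod_cast hk1
  have hmul1 : ((n:ℝ) - k) * (∑ i ∈ Finset.Icc 1 k, a i) ≤ ((n:ℝ) - k) * ((k:ℝ) * a k) :=
    mul_le_mul_of_nonneg_left h1 (by linarith)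
  have hmul2 : (k:ℝ) * (((n:ℝ) - k) * a k) ≤ (k:ℝ) * ∑ i ∈ Finset.Icc (k+1) n, a i :=
    mul_le_mul_of_nonneg_left h2 (by linarith)
  rw [hsplit]
  nlinarith [hmul1, hmul2]

/-- if a frequency-filtration stopping rule `τ` has risk within a
factor `C ≥ 1` of the risk of the balanced oracle `m_s(μ)` at `μ`, then for any
`μ̄` agreeing with `μ` up to index `3C·m_s`,
`R(μ̄,τ)² ≥ (1/3)·B²_{⌊3C m_s⌋}(μ̄)`. -/
theorem frequency_no_adaptation
    {Ω : Type*} [MeasurableSpace Ω] (P : Measure Ω) [IsProbabilityMeasure P]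
    (D : ℕ) (lam μ μbar : ℕ → ℝ) (δ : ℝ) (hδ : 0 < δ)
    (hlam_pos : ∀ i, 1 ≤ i → i ≤ D → 0 < lam i)
    (hlam_mono : ∀ i j, 1 ≤ i → i ≤ j → j ≤ D → lam j ≤ lam i)
    (ε : ℕ → Ω → ℝ) (hεmeas : ∀ i, Measurable (ε i))
    (hεindep : iIndepFun ε P)
    (hεgauss : ∀ i, Measure.map (ε i) P = gaussianReal 0 1)
    (τ : (ℕ → ℝ) → ℕ) (hτD : ∀ y, τ y ≤ D)
    (hstop : ∀ n : ℕ,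
      MeasurableSet[MeasurableSpace.comap
        (fun (y : ℕ → ℝ) (i : ℕ) => if 1 ≤ i ∧ i ≤ n then y i else 0) inferInstance]
        {y : ℕ → ℝ | τ y ≤ n})
    -- the strongly balanced oracle m_s(μ) = min{m : V_m ≥ B_m²(μ)}
    (ms : ℕ) (hmsD : ms ≤ D)
    (hms_bal : δ ^ 2 * ∑ i ∈ Finset.Icc 1 ms, ((lam i)⁻¹) ^ 2
        ≥ ∑ i ∈ Finset.Icc (ms + 1) D, (μ i) ^ 2)
    (hms_min : ∀ m, m < ms →
        δ ^ 2 * ∑ i ∈ Finset.Icc 1 m, ((lam i)⁻¹) ^ 2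
          < ∑ i ∈ Finset.Icc (m + 1) D, (μ i) ^ 2)
    (C : ℝ) (hC : 1 ≤ C)
    (hrisk : svdRisk P D lam δ ε τ μ ≤ C * svdRisk P D lam δ ε (fun _ => ms) μ)
    (hagree : ∀ i : ℕ, 1 ≤ i → ((i : ℕ) : ℝ) ≤ 3 * C * ms → μbar i = μ i) :
    svdRisk P D lam δ ε τ μbar
      ≥ (1 / 3) * ∑ i ∈ Finset.Icc (⌊3 * C * (ms : ℝ)⌋₊ + 1) D, (μbar i) ^ 2 := by
  classical
  have hrisk_nonneg : ∀ ν : ℕ → ℝ, 0 ≤ svdRisk P D lam δ ε τ ν := fun ν =>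
    integral_nonneg fun ω => Finset.sum_nonneg fun i _ => sq_nonneg _
  set m := ⌊3 * C * (ms : ℝ)⌋₊ with hm
  by_cases hmD : D ≤ m
  · have he : Finset.Icc (m + 1) D = ∅ := Finset.Icc_eq_empty (by omega)
    rw [he]
    simpa using hrisk_nonneg μbar
  push_neg at hmD
  have hD1 : 1 ≤ D := by omega
  have h3Cms_nonneg : (0:ℝ) ≤ 3 * C * ms := by positivity
  have hmsm : ms ≤ m := Nat.le_floor (show (ms:ℝ) ≤ 3 * C * (ms:ℝ) by nlinarith [show (0:ℝ) ≤ (ms:ℝ) from Nat.cast_nonneg ms])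
  -- pointwise formula
  have hpointwise : ∀ (t : ℕ) (ν : ℕ → ℝ) (ω : Ω),
      (∑ i ∈ Finset.Icc 1 D,
        ((if i ≤ t then (lam i)⁻¹ * (lam i * ν i + δ * ε i ω) else 0) - ν i) ^ 2)
      = ∑ i ∈ Finset.Icc 1 D,
          (if i ≤ t then (δ * (lam i)⁻¹ * ε i ω) ^ 2 else ν i ^ 2) := by
    intro t ν ω
    refine Finset.sum_congr rfl fun i hi => ?_
    have hi' := Finset.mem_Icc.mp hi
    have hne : lam i ≠ 0 := (hlam_pos i hi'.1 hi'.2).ne'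
    by_cases h : i ≤ t
    · rw [if_pos h, if_pos h]
      have hh : (lam i)⁻¹ * (lam i * ν i + δ * ε i ω) - ν i = δ * (lam i)⁻¹ * ε i ω := by
        field_simp
        ring
      rw [hh]
    · rw [if_neg h, if_neg h]
      ring
  -- measurability
  have hπmeas : ∀ n : ℕ,
      Measurable (fun (y : ℕ → ℝ) (i : ℕ) => if 1 ≤ i ∧ i ≤ n then y i else 0) := by
    intro n
    refine measurable_pi_lambda _ fun i => ?_
    by_cases h : 1 ≤ i ∧ i ≤ n
    · simpa [h] using measurable_pi_apply i
    · simpa [h] using measurable_const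
  have hlev : ∀ n, MeasurableSet {y : ℕ → ℝ | τ y ≤ n} := by
    intro n
    obtain ⟨s, hs, hpre⟩ := MeasurableSpace.measurableSet_comap.mp (hstop n)
    rw [← hpre]
    exact hπmeas n hs
  have hτmeas : Measurable τ := by
    refine measurable_to_countable' fun n => ?_
    match n with
    | 0 =>
      have he : τ ⁻¹' {0} = {y | τ y ≤ 0} := by ext y; simp [Nat.le_zero]
      rw [he]; exact hlev 0
    | Nat.succ k =>
      have he : τ ⁻¹' {k+1} = {y | τ y ≤ k+1} \ {y | τ y ≤ k} := by
        ext y; simp only [Set.mem_preimage, Set.mem_singleton_iff, Set.mem_diff,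
          Set.mem_setOf_eq]; omega
      rw [he]; exact (hlev (k+1)).diff (hlev k)
  have hYmeas : ∀ ν : ℕ → ℝ,
      Measurable (fun ω (j : ℕ) => if 1 ≤ j ∧ j ≤ D then lam j * ν j + δ * ε j ω else 0) := by
    intro ν
    refine measurable_pi_lambda _ fun j => ?_
    by_cases h : 1 ≤ j ∧ j ≤ D
    · simpa [h] using ((hεmeas j).const_mul δ).const_add (lam j * ν j)
    · simpa [h] using measurable_const
  have hTmeas : ∀ ν : ℕ → ℝ,
      Measurable (fun ω => τ (fun j => if 1 ≤ j ∧ j ≤ D then lam j * ν j + δ * ε j ω else 0)) :=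
    fun ν => hτmeas.comp (hYmeas ν)
  -- gaussian moments
  have hε2int : ∀ i, Integrable (fun ω => ε i ω ^ 2) P := by
    intro i
    have h := aux_integrable_sq_gaussianReal
    rw [← hεgauss i] at h
    exact (integrable_map_measure (measurable_id.pow_const 2).aestronglyMeasurable
      (hεmeas i).aemeasurable).mp h
  have hε2 : ∀ i, ∫ ω, ε i ω ^ 2 ∂P = 1 := by
    intro i
    have h := integral_map (μ := P) (φ := ε i) (hεmeas i).aemeasurable
      (f := fun x : ℝ => x ^ 2) (measurable_id.pow_const 2).aestronglyMeasurable
    rw [hεgauss i, aux_integral_sq_gaussianReal] at h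
    exact h.symm
  have hterm_int : ∀ i : ℕ, Integrable (fun ω => (δ * (lam i)⁻¹ * ε i ω) ^ 2) P := by
    intro i
    have h := (hε2int i).const_mul ((δ * (lam i)⁻¹) ^ 2)
    exact h.congr (Filter.Eventually.of_forall fun ω => by ring)
  have hterm_meas : ∀ (ν : ℕ → ℝ) (i : ℕ) (c : ℝ),
      Measurable (fun ω =>
        if i ≤ τ (fun j => if 1 ≤ j ∧ j ≤ D then lam j * ν j + δ * ε j ω else 0)
        then (δ * (lam i)⁻¹ * ε i ω) ^ 2 else c) := by
    intro ν i c
    refine Measurable.ite ?_ (((hεmeas i).const_mul _).pow_const 2) measurable_const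
    exact (hTmeas ν) ((Set.to_countable {t : ℕ | i ≤ t}).measurableSet)
  have hterm_int2 : ∀ (ν : ℕ → ℝ) (i : ℕ) (c : ℝ),
      Integrable (fun ω =>
        if i ≤ τ (fun j => if 1 ≤ j ∧ j ≤ D then lam j * ν j + δ * ε j ω else 0)
        then (δ * (lam i)⁻¹ * ε i ω) ^ 2 else c) P := by
    intro ν i c
    refine Integrable.mono' ((hterm_int i).add (integrable_const |c|))
      (hterm_meas ν i c).aestronglyMeasurable
      (Filter.Eventually.of_forall fun ω => ?_)
    rw [Real.norm_eq_abs]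
    simp only [Pi.add_apply]
    split_ifs with h
    · rw [abs_of_nonneg (sq_nonneg _)]
      have := abs_nonneg c
      linarith
    · have := sq_nonneg (δ * (lam i)⁻¹ * ε i ω)
      linarith
  have hfint : ∀ ν : ℕ → ℝ, Integrable (fun ω => ∑ i ∈ Finset.Icc 1 D,
      (if i ≤ τ (fun j => if 1 ≤ j ∧ j ≤ D then lam j * ν j + δ * ε j ω else 0)
        then (δ * (lam i)⁻¹ * ε i ω) ^ 2 else ν i ^ 2)) P := fun ν =>
    integrable_finset_sum _ fun i _ => by
      have h := hterm_int2 ν i (ν i ^ 2)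
      exact h
  have hgint : Integrable (fun ω => ∑ i ∈ Finset.Icc 1 D,
      (if i ≤ τ (fun j => if 1 ≤ j ∧ j ≤ D then lam j * μ j + δ * ε j ω else 0)
        then (δ * (lam i)⁻¹ * ε i ω) ^ 2 else 0)) P :=
    integrable_finset_sum _ fun i _ => hterm_int2 μ i 0
  have hrisk_eq : ∀ ν : ℕ → ℝ, svdRisk P D lam δ ε τ ν
      = ∫ ω, ∑ i ∈ Finset.Icc 1 D,
          (if i ≤ τ (fun j => if 1 ≤ j ∧ j ≤ D then lam j * ν j + δ * ε j ω else 0)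
            then (δ * (lam i)⁻¹ * ε i ω) ^ 2 else ν i ^ 2) ∂P := by
    intro ν
    simp only [svdRisk]
    exact integral_congr_ae (Filter.Eventually.of_forall fun ω => hpointwise _ ν ω)
  -- oracle risk
  have horacle : svdRisk P D lam δ ε (fun _ => ms) μ
      = δ ^ 2 * ∑ i ∈ Finset.Icc 1 ms, ((lam i)⁻¹) ^ 2
        + ∑ i ∈ Finset.Icc (ms + 1) D, μ i ^ 2 := by
    have h1 : svdRisk P D lam δ ε (fun _ => ms) μ
        = ∫ ω, ∑ i ∈ Finset.Icc 1 D,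
            (if i ≤ ms then (δ * (lam i)⁻¹ * ε i ω) ^ 2 else μ i ^ 2) ∂P := by
      simp only [svdRisk]
      exact integral_congr_ae (Filter.Eventually.of_forall fun ω => hpointwise ms μ ω)
    rw [h1, integral_finset_sum _ (fun i _ => by
      by_cases h : i ≤ ms
      · simpa [h] using hterm_int i
      · simpa [h] using integrable_const (μ i ^ 2))]
    have h2 : ∀ i ∈ Finset.Icc 1 D,
        (∫ ω, (if i ≤ ms then (δ * (lam i)⁻¹ * ε i ω) ^ 2 else μ i ^ 2) ∂P)
          = (if i ≤ ms then δ ^ 2 * ((lam i)⁻¹) ^ 2 else μ i ^ 2) := by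
      intro i _
      by_cases h : i ≤ ms
      · simp only [if_pos h]
        have hh : (fun ω => (δ * (lam i)⁻¹ * ε i ω) ^ 2)
            = fun ω => (δ * (lam i)⁻¹) ^ 2 * ε i ω ^ 2 := funext fun ω => by ring
        rw [hh, integral_const_mul, hε2 i, mul_one]
        ring
      · simp only [if_neg h]
        simp
    rw [Finset.sum_congr rfl h2]
    rw [← Finset.sum_filter_add_sum_filter_not (Finset.Icc 1 D) (fun i => i ≤ ms)]
    have e1 : (Finset.Icc 1 D).filter (fun i => i ≤ ms) = Finset.Icc 1 ms := by
      ext i; simp only [Finset.mem_filter, Finset.mem_Icc]; omega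
    have e2 : (Finset.Icc 1 D).filter (fun i => ¬ i ≤ ms) = Finset.Icc (ms + 1) D := by
      ext i; simp only [Finset.mem_filter, Finset.mem_Icc]; omega
    rw [e1, e2]
    congr 1
    · rw [Finset.mul_sum]
      refine Finset.sum_congr rfl fun i hi => ?_
      rw [if_pos (Finset.mem_Icc.mp hi).2]
    · refine Finset.sum_congr rfl fun i hi => ?_
      rw [if_neg (by have := (Finset.mem_Icc.mp hi).1; omega)]
  -- the sets B_i = {τ ≥ i} under μ
  set Bi : ℕ → Set Ω := fun k =>
    {ω | k ≤ τ (fun j => if 1 ≤ j ∧ j ≤ D then lam j * μ j + δ * ε j ω else 0)} with hBidef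
  have hBmeas : ∀ k, MeasurableSet (Bi k) := by
    intro k
    have he : Bi k = (fun ω => τ (fun j => if 1 ≤ j ∧ j ≤ D then lam j * μ j + δ * ε j ω else 0))
        ⁻¹' {t : ℕ | k ≤ t} := rfl
    rw [he]
    exact (hTmeas μ) ((Set.to_countable _).measurableSet)
  -- key independence computation
  have hkeyint : ∀ n : ℕ,
      ∫ ω, (if n + 1 ≤ τ (fun j => if 1 ≤ j ∧ j ≤ D then lam j * μ j + δ * ε j ω else 0)
          then (δ * (lam (n+1))⁻¹ * ε (n+1) ω) ^ 2 else 0) ∂P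
        = (δ * (lam (n+1))⁻¹) ^ 2 * (P (Bi (n+1))).toReal := by
    intro n
    obtain ⟨S, hSmeas, hSpre⟩ := MeasurableSpace.measurableSet_comap.mp (hstop n)
    have hBmeas' : MeasurableSet (Bi (n+1)) := hBmeas (n+1)
    set Z : Ω → ℕ → ℝ := fun ω j => if 1 ≤ j ∧ j ≤ n
      then (if 1 ≤ j ∧ j ≤ D then lam j * μ j + δ * ε j ω else 0) else 0 with hZdef
    have hZS : ∀ ω, (Z ω ∈ S)
        ↔ (τ (fun j => if 1 ≤ j ∧ j ≤ D then lam j * μ j + δ * ε j ω else 0) ≤ n) := by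
      intro ω
      have h1 := Set.ext_iff.mp hSpre
        (fun j => if 1 ≤ j ∧ j ≤ D then lam j * μ j + δ * ε j ω else 0)
      simpa using h1
    have hZB : Bi (n+1) = Z ⁻¹' Sᶜ := by
      ext ω
      rw [Set.mem_preimage, Set.mem_compl_iff, hZS ω]
      show (n + 1 ≤ τ _) ↔ _
      constructor <;> intro h <;> omega
    have hdisj : Disjoint (Finset.Icc 1 n) ({n+1} : Finset ℕ) := by
      rw [Finset.disjoint_singleton_right]
      simp only [Finset.mem_Icc]
      omega
    have hind0 := hεindep.indepFun_finset (Finset.Icc 1 n) {n+1} hdisj hεmeas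
    set φ : ((Finset.Icc 1 n : Finset ℕ) → ℝ) → (ℕ → ℝ) := fun v j =>
      if h : j ∈ Finset.Icc 1 n then (if j ≤ D then lam j * μ j + δ * v ⟨j, h⟩ else 0) else 0
      with hφdef
    have hφmeas : Measurable φ := by
      refine measurable_pi_lambda _ fun j => ?_
      by_cases h : j ∈ Finset.Icc 1 n
      · simp only [hφdef, dif_pos h]
        by_cases h2 : j ≤ D
        · simp only [if_pos h2]
          fun_prop
        · simp only [if_neg h2]
          exact measurable_const
      · simp only [hφdef, dif_neg h]
        exact measurable_const
    have hZeq : Z = φ ∘ (fun ω (i : (Finset.Icc 1 n : Finset ℕ)) => ε (↑i) ω) := by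
      funext ω j
      simp only [hZdef, hφdef, Function.comp_apply]
      by_cases h1 : 1 ≤ j ∧ j ≤ n
      · have hjm : j ∈ Finset.Icc 1 n := Finset.mem_Icc.mpr h1
        rw [if_pos h1, dif_pos hjm]
        by_cases h2 : j ≤ D
        · rw [if_pos ⟨h1.1, h2⟩, if_pos h2]
        · rw [if_neg (fun hc => h2 hc.2), if_neg h2]
      · have hjm : j ∉ Finset.Icc 1 n := fun hc => h1 (Finset.mem_Icc.mp hc)
        rw [if_neg h1, dif_neg hjm]
    have hεcomp : ε (n+1)
        = (fun v : ((({n+1} : Finset ℕ) : Finset ℕ) → ℝ) => v ⟨n+1, Finset.mem_singleton_self _⟩)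
          ∘ (fun ω (i : (({n+1} : Finset ℕ) : Finset ℕ)) => ε (↑i) ω) := rfl
    have hind1 : IndepFun Z (ε (n+1)) P := by
      rw [hZeq, hεcomp]
      exact hind0.comp hφmeas (measurable_pi_apply _)
    have hind2 : IndepFun (fun ω => (Sᶜ).indicator (fun _ => (1:ℝ)) (Z ω))
        (fun ω => ε (n+1) ω ^ 2) P :=
      hind1.comp (measurable_const.indicator hSmeas.compl) (measurable_id.pow_const 2)
    have he : (fun ω => (Sᶜ).indicator (fun _ => (1:ℝ)) (Z ω))
        = (Bi (n+1)).indicator (fun _ => (1:ℝ)) := by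
      funext ω
      by_cases h : ω ∈ Bi (n+1)
      · have h2 : Z ω ∈ Sᶜ := by rw [hZB] at h; exact h
        rw [Set.indicator_of_mem h2, Set.indicator_of_mem h]
      · have h2 : Z ω ∉ Sᶜ := by rw [hZB] at h; exact h
        rw [Set.indicator_of_notMem h2, Set.indicator_of_notMem h]
    have hint1 : Integrable (fun ω => (Sᶜ).indicator (fun _ => (1:ℝ)) (Z ω)) P := by
      rw [he]
      exact (integrable_const (1:ℝ)).indicator hBmeas'
    have hmul := IndepFun.integral_mul_eq_mul_integral hind2 hint1.aestronglyMeasurable (hε2int (n+1)).aestronglyMeasurable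
    have hXint : ∫ ω, (Sᶜ).indicator (fun _ => (1:ℝ)) (Z ω) ∂P = (P (Bi (n+1))).toReal := by
      rw [he, integral_indicator_const _ hBmeas', smul_eq_mul, mul_one]; rfl
    have hid : (fun ω =>
        (if n + 1 ≤ τ (fun j => if 1 ≤ j ∧ j ≤ D then lam j * μ j + δ * ε j ω else 0)
          then (δ * (lam (n+1))⁻¹ * ε (n+1) ω) ^ 2 else 0))
        = fun ω => (δ * (lam (n+1))⁻¹) ^ 2
            * ((Sᶜ).indicator (fun _ => (1:ℝ)) (Z ω) * ε (n+1) ω ^ 2) := by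
      funext ω
      by_cases h : ω ∈ Bi (n+1)
      · have h1 : n + 1 ≤ τ (fun j => if 1 ≤ j ∧ j ≤ D then lam j * μ j + δ * ε j ω else 0) := h
        have h2 : Z ω ∈ Sᶜ := by rw [hZB] at h; exact h
        rw [if_pos h1, Set.indicator_of_mem h2]
        ring
      · have h1 : ¬ n + 1 ≤ τ (fun j => if 1 ≤ j ∧ j ≤ D then lam j * μ j + δ * ε j ω else 0) := h
        have h2 : Z ω ∉ Sᶜ := by rw [hZB] at h; exact h
        rw [if_neg h1, Set.indicator_of_notMem h2]
        ring
    rw [hid, integral_const_mul]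
    have hsplit : (fun ω => (Sᶜ).indicator (fun _ => (1:ℝ)) (Z ω) * ε (n+1) ω ^ 2)
        = (fun ω => (Sᶜ).indicator (fun _ => (1:ℝ)) (Z ω)) * (fun ω => ε (n+1) ω ^ 2) := rfl
    rw [hsplit, hmul, hXint, hε2 (n+1), mul_one]
  -- lower bound under μ
  have hlow_mu : (P (Bi (m+1))).toReal
      * (δ ^ 2 * ∑ i ∈ Finset.Icc 1 (m+1), ((lam i)⁻¹) ^ 2)
      ≤ svdRisk P D lam δ ε τ μ := by
    rw [hrisk_eq μ]
    have step1 : ∫ ω, ∑ i ∈ Finset.Icc 1 D,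
        (if i ≤ τ (fun j => if 1 ≤ j ∧ j ≤ D then lam j * μ j + δ * ε j ω else 0)
          then (δ * (lam i)⁻¹ * ε i ω) ^ 2 else 0) ∂P
        ≤ ∫ ω, ∑ i ∈ Finset.Icc 1 D,
        (if i ≤ τ (fun j => if 1 ≤ j ∧ j ≤ D then lam j * μ j + δ * ε j ω else 0)
          then (δ * (lam i)⁻¹ * ε i ω) ^ 2 else μ i ^ 2) ∂P := by
      refine integral_mono hgint (hfint μ) fun ω => Finset.sum_le_sum fun i _ => ?_
      split_ifs
      · exact le_rfl
      · exact sq_nonneg _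
    have step2 : ∫ ω, ∑ i ∈ Finset.Icc 1 D,
        (if i ≤ τ (fun j => if 1 ≤ j ∧ j ≤ D then lam j * μ j + δ * ε j ω else 0)
          then (δ * (lam i)⁻¹ * ε i ω) ^ 2 else 0) ∂P
        = ∑ i ∈ Finset.Icc 1 D, (δ * (lam i)⁻¹) ^ 2 * (P (Bi i)).toReal := by
      rw [integral_finset_sum _ (fun i _ => hterm_int2 μ i 0)]
      refine Finset.sum_congr rfl fun i hi => ?_
      obtain ⟨n, rfl⟩ : ∃ n, i = n + 1 := ⟨i - 1, by
        have := (Finset.mem_Icc.mp hi).1; omega⟩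
      exact hkeyint n
    have step4 : ∑ i ∈ Finset.Icc 1 (m+1), (δ * (lam i)⁻¹) ^ 2 * (P (Bi i)).toReal
        ≤ ∑ i ∈ Finset.Icc 1 D, (δ * (lam i)⁻¹) ^ 2 * (P (Bi i)).toReal :=
      Finset.sum_le_sum_of_subset_of_nonneg
        (Finset.Icc_subset_Icc le_rfl (by omega))
        (fun i _ _ => mul_nonneg (sq_nonneg _) ENNReal.toReal_nonneg)
    have step5 : (P (Bi (m+1))).toReal
        * (δ ^ 2 * ∑ i ∈ Finset.Icc 1 (m+1), ((lam i)⁻¹) ^ 2)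
        ≤ ∑ i ∈ Finset.Icc 1 (m+1), (δ * (lam i)⁻¹) ^ 2 * (P (Bi i)).toReal := by
      have e : (P (Bi (m+1))).toReal
          * (δ ^ 2 * ∑ i ∈ Finset.Icc 1 (m+1), ((lam i)⁻¹) ^ 2)
          = ∑ i ∈ Finset.Icc 1 (m+1), (δ * (lam i)⁻¹) ^ 2 * (P (Bi (m+1))).toReal := by
        rw [Finset.mul_sum, Finset.mul_sum]
        exact Finset.sum_congr rfl fun i _ => by ring
      rw [e]
      refine Finset.sum_le_sum fun i hi => ?_
      refine mul_le_mul_of_nonneg_left ?_ (sq_nonneg _)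
      refine (ENNReal.toReal_le_toReal (measure_ne_top _ _) (measure_ne_top _ _)).mpr ?_
      refine measure_mono fun ω hω => ?_
      have h1 : m + 1 ≤ τ (fun j => if 1 ≤ j ∧ j ≤ D then lam j * μ j + δ * ε j ω else 0) := hω
      have h2 := (Finset.mem_Icc.mp hi).2
      show i ≤ τ _
      omega
    calc (P (Bi (m+1))).toReal * (δ ^ 2 * ∑ i ∈ Finset.Icc 1 (m+1), ((lam i)⁻¹) ^ 2)
        ≤ ∑ i ∈ Finset.Icc 1 (m+1), (δ * (lam i)⁻¹) ^ 2 * (P (Bi i)).toReal := step5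
      _ ≤ ∑ i ∈ Finset.Icc 1 D, (δ * (lam i)⁻¹) ^ 2 * (P (Bi i)).toReal := step4
      _ = ∫ ω, ∑ i ∈ Finset.Icc 1 D,
            (if i ≤ τ (fun j => if 1 ≤ j ∧ j ≤ D then lam j * μ j + δ * ε j ω else 0)
              then (δ * (lam i)⁻¹ * ε i ω) ^ 2 else 0) ∂P := step2.symm
      _ ≤ _ := step1
  -- upper bound under μ
  have hV1_nonneg : (0:ℝ) ≤ ∑ i ∈ Finset.Icc 1 ms, ((lam i)⁻¹) ^ 2 :=
    Finset.sum_nonneg fun i _ => sq_nonneg _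
  have hup : svdRisk P D lam δ ε τ μ
      ≤ 2 * C * (δ ^ 2 * ∑ i ∈ Finset.Icc 1 ms, ((lam i)⁻¹) ^ 2) := by
    have h0 : (0:ℝ) ≤ C := by linarith
    calc svdRisk P D lam δ ε τ μ ≤ C * svdRisk P D lam δ ε (fun _ => ms) μ := hrisk
      _ = C * (δ ^ 2 * ∑ i ∈ Finset.Icc 1 ms, ((lam i)⁻¹) ^ 2
            + ∑ i ∈ Finset.Icc (ms + 1) D, μ i ^ 2) := by rw [horacle]
      _ ≤ 2 * C * (δ ^ 2 * ∑ i ∈ Finset.Icc 1 ms, ((lam i)⁻¹) ^ 2) := by nlinarith [hms_bal]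
  -- probability bound
  have hVn_pos : (0:ℝ) < ∑ i ∈ Finset.Icc 1 (m+1), ((lam i)⁻¹) ^ 2 := by
    have h1 : (0:ℝ) < ((lam 1)⁻¹) ^ 2 := by
      have := hlam_pos 1 le_rfl hD1
      positivity
    refine lt_of_lt_of_le h1 (Finset.single_le_sum (fun i _ => sq_nonneg ((lam i)⁻¹))
      (Finset.mem_Icc.mpr ⟨le_rfl, by omega⟩))
  set p := (P (Bi (m+1))).toReal with hpdef
  have hp0 : 0 ≤ p := ENNReal.toReal_nonneg
  have hδ2 : (0:ℝ) < δ ^ 2 := pow_pos hδ 2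
  have hple : p ≤ 2/3 := by
    rcases Nat.eq_zero_or_pos ms with h0 | hms1
    · have hV10 : ∑ i ∈ Finset.Icc 1 ms, ((lam i)⁻¹) ^ 2 = 0 := by
        rw [h0]; simp
      rw [hV10] at hup
      have := le_trans hlow_mu hup
      nlinarith [mul_pos hδ2 hVn_pos]
    · have hcheb := aux_cheb (fun i => ((lam i)⁻¹) ^ 2) (m+1) ms hms1 (by omega)
        (fun i j h1 hij hj => by
          have hjD : j ≤ D := by omega
          have hiD : i ≤ D := by omega
          have hle := hlam_mono i j h1 hij hjD
          have hpi := hlam_pos i h1 hiD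
          have hpj := hlam_pos j (by omega) hjD
          have hinv : (lam i)⁻¹ ≤ (lam j)⁻¹ := by
            exact inv_anti₀ hpj hle
          exact pow_le_pow_left₀ (inv_nonneg.mpr hpi.le) hinv 2)
        (fun i => sq_nonneg _)
      have hfl : 3 * C * (ms:ℝ) < (m:ℝ) + 1 := by
        have h := Nat.lt_floor_add_one (3 * C * (ms:ℝ))
        rw [hm]
        push_cast
        exact_mod_cast h
      have hmspos : (0:ℝ) < ms := by exact_mod_cast hms1
      push_cast at hcheb
      -- hcheb : ((m:ℝ)+1) * ∑_{1..ms} ≤ ms * ∑_{1..m+1}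
      have h3 : 3 * C * (∑ i ∈ Finset.Icc 1 ms, ((lam i)⁻¹) ^ 2)
          ≤ ∑ i ∈ Finset.Icc 1 (m+1), ((lam i)⁻¹) ^ 2 := by
        have hstep : (ms:ℝ) * (3 * C * (∑ i ∈ Finset.Icc 1 ms, ((lam i)⁻¹) ^ 2))
            ≤ (ms:ℝ) * (∑ i ∈ Finset.Icc 1 (m+1), ((lam i)⁻¹) ^ 2) := by
          nlinarith [hcheb, mul_le_mul_of_nonneg_right hfl.le hV1_nonneg]
        exact (mul_le_mul_iff_right₀ hmspos).mp hstep
      have h4 := le_trans hlow_mu hup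
      have h5 : 2 * C * (δ ^ 2 * ∑ i ∈ Finset.Icc 1 ms, ((lam i)⁻¹) ^ 2)
          ≤ (2/3) * (δ ^ 2 * ∑ i ∈ Finset.Icc 1 (m+1), ((lam i)⁻¹) ^ 2) := by
        nlinarith [h3, hδ2.le]
      have h6 : p * (δ ^ 2 * ∑ i ∈ Finset.Icc 1 (m+1), ((lam i)⁻¹) ^ 2)
          ≤ (2/3) * (δ ^ 2 * ∑ i ∈ Finset.Icc 1 (m+1), ((lam i)⁻¹) ^ 2) :=
        le_trans h4 h5
      exact le_of_mul_le_mul_right h6 (mul_pos hδ2 hVn_pos)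
  -- transfer the event to μbar
  obtain ⟨S, hSmeas, hSpre⟩ := MeasurableSpace.measurableSet_comap.mp (hstop m)
  have hevent : ∀ ω : Ω,
      (τ (fun j => if 1 ≤ j ∧ j ≤ D then lam j * μbar j + δ * ε j ω else 0) ≤ m)
      ↔ (τ (fun j => if 1 ≤ j ∧ j ≤ D then lam j * μ j + δ * ε j ω else 0) ≤ m) := by
    intro ω
    have hYeq : (fun (i : ℕ) => if 1 ≤ i ∧ i ≤ m
          then (fun j => if 1 ≤ j ∧ j ≤ D then lam j * μbar j + δ * ε j ω else 0) i else 0)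
        = (fun (i : ℕ) => if 1 ≤ i ∧ i ≤ m
          then (fun j => if 1 ≤ j ∧ j ≤ D then lam j * μ j + δ * ε j ω else 0) i else 0) := by
      funext i
      by_cases h : 1 ≤ i ∧ i ≤ m
      · rw [if_pos h, if_pos h]
        have hiD : i ≤ D := by omega
        simp only
        rw [if_pos ⟨h.1, hiD⟩, if_pos ⟨h.1, hiD⟩]
        have hieq : μbar i = μ i := by
          refine hagree i h.1 ?_
          have h2 := h.2
          rw [hm] at h2
          exact (Nat.le_floor_iff h3Cms_nonneg).mp h2
        rw [hieq]
      · rw [if_neg h, if_neg h]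
    have h1 := Set.ext_iff.mp hSpre
      (fun j => if 1 ≤ j ∧ j ≤ D then lam j * μbar j + δ * ε j ω else 0)
    have h2 := Set.ext_iff.mp hSpre
      (fun j => if 1 ≤ j ∧ j ≤ D then lam j * μ j + δ * ε j ω else 0)
    simp only [Set.mem_preimage, Set.mem_setOf_eq] at h1 h2
    rw [← h1, ← h2, hYeq]
  set A : Set Ω := {ω |
    τ (fun j => if 1 ≤ j ∧ j ≤ D then lam j * μbar j + δ * ε j ω else 0) ≤ m} with hAdef
  have hcompl : A = (Bi (m+1))ᶜ := by
    ext ω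
    show (τ _ ≤ m) ↔ ¬ (m + 1 ≤ τ _)
    rw [hevent ω]
    constructor <;> intro h <;> omega
  have hAmeas : MeasurableSet A := by
    rw [hcompl]
    exact (hBmeas (m+1)).compl
  have hPA : (P A).toReal = 1 - p := by
    rw [hcompl, measure_compl (hBmeas (m+1)) (measure_ne_top _ _), measure_univ]
    rw [ENNReal.toReal_sub_of_le prob_le_one ENNReal.one_ne_top, ENNReal.toReal_one]
  -- lower bound for μbar risk
  have hBbar_nonneg : (0:ℝ) ≤ ∑ i ∈ Finset.Icc (m+1) D, μbar i ^ 2 :=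
    Finset.sum_nonneg fun i _ => sq_nonneg _
  have hfinal : (P A).toReal * (∑ i ∈ Finset.Icc (m+1) D, μbar i ^ 2)
      ≤ svdRisk P D lam δ ε τ μbar := by
    rw [hrisk_eq μbar]
    have hind : ∀ ω : Ω,
        A.indicator (fun _ => ∑ i ∈ Finset.Icc (m+1) D, μbar i ^ 2) ω
        ≤ ∑ i ∈ Finset.Icc 1 D,
            (if i ≤ τ (fun j => if 1 ≤ j ∧ j ≤ D then lam j * μbar j + δ * ε j ω else 0)
              then (δ * (lam i)⁻¹ * ε i ω) ^ 2 else μbar i ^ 2) := by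
      intro ω
      by_cases hA : ω ∈ A
      · rw [Set.indicator_of_mem hA]
        have hsub : Finset.Icc (m+1) D ⊆ Finset.Icc 1 D :=
          Finset.Icc_subset_Icc (by omega) le_rfl
        calc ∑ i ∈ Finset.Icc (m+1) D, μbar i ^ 2
            = ∑ i ∈ Finset.Icc (m+1) D,
                (if i ≤ τ (fun j => if 1 ≤ j ∧ j ≤ D then lam j * μbar j + δ * ε j ω else 0)
                  then (δ * (lam i)⁻¹ * ε i ω) ^ 2 else μbar i ^ 2) := by
              refine Finset.sum_congr rfl fun i hi => ?_
              have h1 := (Finset.mem_Icc.mp hi).1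
              have h2 : τ (fun j => if 1 ≤ j ∧ j ≤ D
                  then lam j * μbar j + δ * ε j ω else 0) ≤ m := hA
              rw [if_neg (by omega)]
          _ ≤ _ := Finset.sum_le_sum_of_subset_of_nonneg hsub
              (fun i _ _ => by split_ifs <;> exact sq_nonneg _)
      · rw [Set.indicator_of_notMem hA]
        exact Finset.sum_nonneg fun i _ => by split_ifs <;> exact sq_nonneg _
    have h := integral_mono ((integrable_const _).indicator hAmeas) (hfint μbar)
      hind
    rwa [integral_indicator_const _ hAmeas, smul_eq_mul] at h
  have h13 : (1/3 : ℝ) ≤ (P A).toReal := by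
    rw [hPA]; linarith
  calc svdRisk P D lam δ ε τ μbar
      ≥ (P A).toReal * (∑ i ∈ Finset.Icc (m+1) D, μbar i ^ 2) := hfinal
    _ ≥ (1/3) * ∑ i ∈ Finset.Icc (m+1) D, μbar i ^ 2 :=
        mul_le_mul_of_nonneg_right h13 hBbar_nonneg
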